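/- Let d ≥ 1 and suppose a₁, a₂, b₁, b₂ ∈ s'(ℤ^d) satisfy b₁(n)a₁(n) + b₂(n)a₂(n) = 1 for all n ∈ ℤ^d. Then there exists h ∈ s'(ℤ^d) such that a₁ + h·a₂ is invertible in s'(ℤ^d). (Consequently the Bass stable rank of s'(ℤ^d) equals 1.) -/

import Mathlib

/-- The 1-norm of a lattice point `n ∈ ℤ^d`. -/
def norm1 {d : ℕ} (n : Fin d → ℤ) : ℝ := ∑ i, |(n i : ℝ)|

/-- `a : ℤ^d → ℂ` has at most polynomial growth, i.e. belongs to `s'(ℤ^d)`. -/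
def PolyGrowth {d : ℕ} (a : (Fin d → ℤ) → ℂ) : Prop :=
  ∃ M : ℝ, 0 < M ∧ ∃ k : ℕ, ∀ n : Fin d → ℤ, ‖a n‖ ≤ M * (1 + norm1 n) ^ k

/-- `a` is invertible in `s'(ℤ^d)`. -/
def IsInvertibleSprime {d : ℕ} (a : (Fin d → ℤ) → ℂ) : Prop :=
  PolyGrowth a ∧ ∃ b : (Fin d → ℤ) → ℂ, PolyGrowth b ∧ ∀ n, a n * b n = 1

lemma norm1_nonneg {d : ℕ} (n : Fin d → ℤ) : 0 ≤ norm1 n :=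
  Finset.sum_nonneg fun i _ => abs_nonneg _

lemma one_le_base {d : ℕ} (n : Fin d → ℤ) : (1:ℝ) ≤ 1 + norm1 n := by
  linarith [norm1_nonneg n]

/-- The Bass stable rank of `s'(ℤ^d)` is one: every unimodular pair is reducible. -/
theorem bass_stable_rank_one (d : ℕ) (hd : 1 ≤ d)
    (a₁ a₂ b₁ b₂ : (Fin d → ℤ) → ℂ)
    (ha₁ : PolyGrowth a₁) (ha₂ : PolyGrowth a₂)
    (hb₁ : PolyGrowth b₁) (hb₂ : PolyGrowth b₂)
    (hbez : ∀ n : Fin d → ℤ, b₁ n * a₁ n + b₂ n * a₂ n = 1) :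
    ∃ h : (Fin d → ℤ) → ℂ, PolyGrowth h ∧
      IsInvertibleSprime (fun n => a₁ n + h n * a₂ n) := by
  classical
  obtain ⟨M₁, hM₁, k₁, hA₁⟩ := ha₁
  obtain ⟨M₂, hM₂, k₂, hA₂⟩ := ha₂
  obtain ⟨N₁, hN₁, l₁, hB₁⟩ := hb₁
  obtain ⟨N₂, hN₂, l₂, hB₂⟩ := hb₂
  set h : (Fin d → ℤ) → ℂ := fun n =>
    if ‖a₂ n‖ ≤ ‖a₁ n‖ then 0 else (a₂ n - a₁ n) / a₂ n with hh
  set f : (Fin d → ℤ) → ℂ := fun n => a₁ n + h n * a₂ n with hf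
  -- pointwise value of f
  have hfval : ∀ n, (‖a₂ n‖ ≤ ‖a₁ n‖ ∧ f n = a₁ n)
      ∨ (‖a₁ n‖ < ‖a₂ n‖ ∧ f n = a₂ n) := by
    intro n
    by_cases hc : ‖a₂ n‖ ≤ ‖a₁ n‖
    · exact Or.inl ⟨hc, by simp [hf, hh, hc]⟩
    · refine Or.inr ⟨lt_of_not_ge hc, ?_⟩
      have ha2 : a₂ n ≠ 0 := by
        intro h0
        exact hc (by simp [h0])
      simp only [hf, hh, if_neg hc]
      field_simp
      ring
  -- |a₁ n| ≤ |f n| and |a₂ n| ≤ |f n|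
  have hmax : ∀ n, ‖a₁ n‖ ≤ ‖f n‖
      ∧ ‖a₂ n‖ ≤ ‖f n‖ := by
    intro n
    rcases hfval n with ⟨hc, he⟩ | ⟨hc, he⟩
    · rw [he]; exact ⟨le_refl _, hc⟩
    · rw [he]; exact ⟨le_of_lt hc, le_refl _⟩
  -- key lower bound
  have key : ∀ n, 1 ≤ 2 * max (‖b₁ n‖) (‖b₂ n‖)
      * ‖f n‖ := by
    intro n
    have h1 : ‖b₁ n * a₁ n + b₂ n * a₂ n‖ = 1 := by rw [hbez n]; simp
    have h2 : ‖b₁ n * a₁ n + b₂ n * a₂ n‖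
        ≤ ‖b₁ n‖ * ‖a₁ n‖
          + ‖b₂ n‖ * ‖a₂ n‖ := by
      calc ‖b₁ n * a₁ n + b₂ n * a₂ n‖
          ≤ ‖b₁ n * a₁ n‖ + ‖b₂ n * a₂ n‖ :=
            norm_add_le _ _
        _ = _ := by rw [norm_mul, norm_mul]
    have p1 : ‖b₁ n‖ * ‖a₁ n‖
        ≤ max (‖b₁ n‖) (‖b₂ n‖) * ‖f n‖ :=
      mul_le_mul (le_max_left _ _) (hmax n).1 (norm_nonneg _)
        (le_trans (norm_nonneg _) (le_max_left _ _))
    have p2 : ‖b₂ n‖ * ‖a₂ n‖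
        ≤ max (‖b₁ n‖) (‖b₂ n‖) * ‖f n‖ :=
      mul_le_mul (le_max_right _ _) (hmax n).2 (norm_nonneg _)
        (le_trans (norm_nonneg _) (le_max_left _ _))
    nlinarith
  have fne : ∀ n, f n ≠ 0 := by
    intro n h0
    have := key n
    rw [h0, norm_zero, mul_zero] at this
    linarith
  refine ⟨h, ?_, ⟨?_, fun n => (f n)⁻¹, ?_, fun n => mul_inv_cancel₀ (fne n)⟩⟩
  · -- PolyGrowth h
    refine ⟨2, by norm_num, 0, fun n => ?_⟩
    simp only [pow_zero, mul_one, hh]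
    by_cases hc : ‖a₂ n‖ ≤ ‖a₁ n‖
    · simp [hc]
    · have hlt := lt_of_not_ge hc
      have ha2 : a₂ n ≠ 0 := by
        intro h0; exact hc (by simp [h0])
      have hpos : 0 < ‖a₂ n‖ := by
        simpa using norm_pos_iff.mpr ha2
      rw [if_neg hc, norm_div]
      rw [div_le_iff₀ hpos]
      have : ‖a₂ n - a₁ n‖ ≤ ‖a₂ n‖ + ‖a₁ n‖ := by
        simpa [sub_eq_add_neg] using norm_add_le (a₂ n) (-a₁ n)
      nlinarith
  · -- PolyGrowth f
    refine ⟨M₁ + M₂, by linarith, max k₁ k₂, fun n => ?_⟩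
    have e1 : (1 + norm1 n) ^ k₁ ≤ (1 + norm1 n) ^ max k₁ k₂ :=
      pow_le_pow_right₀ (one_le_base n) (le_max_left _ _)
    have e2 : (1 + norm1 n) ^ k₂ ≤ (1 + norm1 n) ^ max k₁ k₂ :=
      pow_le_pow_right₀ (one_le_base n) (le_max_right _ _)
    have hle : ‖f n‖ ≤ ‖a₁ n‖ + ‖a₂ n‖ := by
      rcases hfval n with ⟨_, he⟩ | ⟨_, he⟩
      · rw [he]; linarith [norm_nonneg (a₂ n)]
      · rw [he]; linarith [norm_nonneg (a₁ n)]
    calc ‖f n‖ ≤ ‖a₁ n‖ + ‖a₂ n‖ := hle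
      _ ≤ M₁ * (1 + norm1 n) ^ k₁ + M₂ * (1 + norm1 n) ^ k₂ :=
          add_le_add (hA₁ n) (hA₂ n)
      _ ≤ (M₁ + M₂) * (1 + norm1 n) ^ max k₁ k₂ := by nlinarith
  · -- PolyGrowth of the inverse
    refine ⟨2 * max N₁ N₂, by positivity, max l₁ l₂, fun n => ?_⟩
    have fpos : 0 < ‖f n‖ := norm_pos_iff.mpr (fne n)
    have hinv : ‖(f n)⁻¹‖
        ≤ 2 * max (‖b₁ n‖) (‖b₂ n‖) := by
      rw [norm_inv, inv_le_iff_one_le_mul₀ fpos]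
      have := key n
      nlinarith
    have e1 : (1 + norm1 n) ^ l₁ ≤ (1 + norm1 n) ^ max l₁ l₂ :=
      pow_le_pow_right₀ (one_le_base n) (le_max_left _ _)
    have e2 : (1 + norm1 n) ^ l₂ ≤ (1 + norm1 n) ^ max l₁ l₂ :=
      pow_le_pow_right₀ (one_le_base n) (le_max_right _ _)
    have hBmax : max (‖b₁ n‖) (‖b₂ n‖)
        ≤ max N₁ N₂ * (1 + norm1 n) ^ max l₁ l₂ := by
      apply max_le
      · calc ‖b₁ n‖ ≤ N₁ * (1 + norm1 n) ^ l₁ := hB₁ n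
          _ ≤ max N₁ N₂ * (1 + norm1 n) ^ max l₁ l₂ := by
            have : (0:ℝ) ≤ N₁ := le_of_lt hN₁
            nlinarith [le_max_left N₁ N₂, pow_pos (lt_of_lt_of_le one_pos (one_le_base n)) l₁]
      · calc ‖b₂ n‖ ≤ N₂ * (1 + norm1 n) ^ l₂ := hB₂ n
          _ ≤ max N₁ N₂ * (1 + norm1 n) ^ max l₁ l₂ := by
            have : (0:ℝ) ≤ N₂ := le_of_lt hN₂
            nlinarith [le_max_right N₁ N₂, pow_pos (lt_of_lt_of_le one_pos (one_le_base n)) l₂]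
    calc ‖(f n)⁻¹‖ ≤ 2 * max (‖b₁ n‖) (‖b₂ n‖) := hinv
      _ ≤ 2 * max N₁ N₂ * (1 + norm1 n) ^ max l₁ l₂ := by linarith
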